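/- For every integer m ≥ 3, the equation x₁ + x₂ + ⋯ + x_{m−1} = (m−1)² x_m has degree of regularity exactly 2: it is 2-regular but not 3-regular. -/

import Mathlib

private lemma fin2_trans : ∀ a b c : Fin 2, a ≠ b → c ≠ b → a = c := by decide

private lemma sum_ite (k a b : ℕ) :
    ∑ i : Fin (k+1), (if i = 0 then a else b) = a + k * b := by
  rw [Fin.sum_univ_succ]
  simp [Fin.succ_ne_zero, Finset.sum_const, Finset.card_univ, mul_comm]

private lemma two_reg (D : ℕ) (hD : 2 ≤ D) (χ : ℕ → Fin 2) :
    ∃ (x : Fin D → ℕ) (y : ℕ), (∀ i, 0 < x i) ∧ 0 < y ∧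
      (∑ i, x i) = D ^ 2 * y ∧ (∀ i, χ (x i) = χ y) := by
  obtain ⟨k, rfl⟩ : ∃ k, D = k + 1 := ⟨D - 1, by omega⟩
  have hk : 1 ≤ k := by omega
  by_contra hcon
  push_neg at hcon
  have key : ∀ a b y : ℕ, 0 < a → 0 < b → 0 < y → a + k * b = (k+1)^2 * y →
      χ a = χ y → χ b = χ y → False := by
    intro a b y ha hb hy hsum hca hcb
    obtain ⟨i, hi⟩ := hcon (fun i => if i = 0 then a else b) y
      (fun i => by split <;> assumption)
      hy (by rw [sum_ite]; exact hsum)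
    by_cases h0 : i = 0
    · simp only [h0, if_pos rfl] at hi; exact hi hca
    · simp only [if_neg h0] at hi; exact hi hcb
  have h1 : ∀ n, 0 < n → χ ((k+1) * n) ≠ χ n := by
    intro n hn h
    exact key ((k+1)*n) ((k+1)*n) n (by positivity) (by positivity) hn (by ring) h h
  have h2 : ∀ n, 0 < n → χ ((k+2) * n) ≠ χ n := by
    intro n hn h
    exact key n ((k+2)*n) n hn (by positivity) hn (by ring) rfl h
  have h3 : ∀ n, 0 < n → χ ((k*k+k+1) * n) ≠ χ n := by
    intro n hn h
    exact key ((k*k+k+1)*n) n n (by positivity) hn hn (by ring) h rfl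
  have e1 : ∀ n, 0 < n → χ ((k+1)*(k+1) * n) = χ n := by
    intro n hn
    have ha := h1 ((k+1)*n) (by positivity)
    rw [show (k+1)*((k+1)*n) = (k+1)*(k+1)*n by ring] at ha
    exact fin2_trans _ _ _ ha (h1 n hn).symm
  have e2 : ∀ n, 0 < n → χ ((k+1)*(k+2) * n) = χ n := by
    intro n hn
    have ha := h2 ((k+1)*n) (by positivity)
    rw [show (k+2)*((k+1)*n) = (k+1)*(k+2)*n by ring] at ha
    exact fin2_trans _ _ _ ha (h1 n hn).symm
  have h4 : ∀ n, 0 < n → χ ((k+1)*(k+1)*((k+1)*(k+1)+1) * n) ≠ χ n := by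
    intro n hn h
    exact key ((k+1)*(k+1)*((k+1)*(k+1)+1)*n) ((k+1)*(k+1)*n) ((k+1)*(k+2)*n)
      (by positivity) (by positivity) (by positivity) (by ring)
      (h.trans (e2 n hn).symm) ((e1 n hn).trans (e2 n hn).symm)
  have e5 : ∀ n, 0 < n → χ ((k+1)*((k+1)*(k+1)+1) * n) = χ n := by
    intro n hn
    have ha := h1 ((k+1)*((k+1)*(k+1)+1)*n) (by positivity)
    rw [show (k+1)*((k+1)*((k+1)*(k+1)+1)*n) = (k+1)*(k+1)*((k+1)*(k+1)+1)*n by ring] at ha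
    exact fin2_trans _ _ _ ha.symm (h4 n hn).symm
  -- final monochromatic solution at n = 1
  have fy : χ ((k+1)*(k+1)) = χ 1 := by
    have := e1 1 one_pos; rwa [mul_one] at this
  have fb : χ ((k+1)*((k+1)*(k+1)+1)) = χ 1 := by
    have := e5 1 one_pos; rwa [mul_one] at this
  have fa : χ ((k+1)*(k*k+k+1)) = χ 1 := by
    have ha := h3 (k+1) (by positivity)
    rw [show (k*k+k+1)*(k+1) = (k+1)*(k*k+k+1) by ring] at ha
    have hb := h1 1 one_pos
    rw [mul_one] at hb
    exact fin2_trans _ _ _ ha hb.symm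
  exact key ((k+1)*(k*k+k+1)) ((k+1)*((k+1)*(k+1)+1)) ((k+1)*(k+1))
    (by positivity) (by positivity) (by positivity) (by ring)
    (fa.trans fy.symm) (fb.trans fy.symm)

private lemma not_three_reg (D : ℕ) (hD : 2 ≤ D) :
    ∃ χ : ℕ → Fin 3, ∀ (x : Fin D → ℕ) (y : ℕ),
      (∀ i, 0 < x i) → 0 < y →
      (∑ i, x i) = D ^ 2 * y →
      ¬ (∀ i, χ (x i) = χ y) := by
  refine ⟨fun n => ⟨Nat.log D n % 3, Nat.mod_lt _ (by norm_num)⟩, ?_⟩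
  intro x y hx hy hsum hall
  have hD1 : 1 < D := by omega
  set j := Nat.log D y with hj
  obtain ⟨i, -, hmax⟩ := Finset.exists_max_image Finset.univ x
    ⟨⟨0, by omega⟩, Finset.mem_univ _⟩
  have hcard : (Finset.univ : Finset (Fin D)).card = D := by simp
  have hsumle : ∑ t, x t ≤ D * x i := by
    calc ∑ t, x t ≤ (Finset.univ : Finset (Fin D)).card • x i :=
          Finset.sum_le_card_nsmul _ _ _ (fun t _ => hmax t (Finset.mem_univ t))
      _ = D * x i := by rw [hcard, smul_eq_mul]
  have hylow : D ^ j ≤ y := Nat.pow_log_le_self D hy.ne'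
  have hyup : y < D ^ (j + 1) := Nat.lt_pow_succ_log_self hD1 y
  have hxlow : D ^ (j + 1) ≤ x i := by
    have h1 : D * (D ^ (j+1)) ≤ D * x i := by
      calc D * D ^ (j+1) = D ^ 2 * D ^ j := by ring
        _ ≤ D ^ 2 * y := Nat.mul_le_mul_left _ hylow
        _ = ∑ t, x t := hsum.symm
        _ ≤ D * x i := hsumle
    exact Nat.le_of_mul_le_mul_left h1 (by omega)
  have hxup : x i < D ^ (j + 3) := by
    calc x i ≤ ∑ t, x t := Finset.single_le_sum (fun t _ => Nat.zero_le _) (Finset.mem_univ i)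
      _ = D ^ 2 * y := hsum
      _ < D ^ 2 * D ^ (j+1) := mul_lt_mul_of_pos_left hyup (by positivity)
      _ = D ^ (j + 3) := by ring
  have hxi0 : x i ≠ 0 := (hx i).ne'
  have hlog_lo : j + 1 ≤ Nat.log D (x i) := (Nat.le_log_iff_pow_le hD1 hxi0).mpr hxlow
  have hlog_hi : Nat.log D (x i) < j + 3 := by
    by_contra hc
    push_neg at hc
    exact Nat.lt_irrefl _ (Nat.lt_of_lt_of_le hxup ((Nat.le_log_iff_pow_le hD1 hxi0).mp hc))
  have hvals : Nat.log D (x i) % 3 = Nat.log D y % 3 := congrArg Fin.val (hall i)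
  rw [← hj] at hvals
  omega

/-- For `m ≥ 3`, the equation `x₁ + ⋯ + x_{m-1} = (m-1)² x_m` is 2-regular but
not 3-regular, i.e. it has degree of regularity exactly 2. -/
theorem stmt_6 (m : ℕ) (hm : 3 ≤ m) :
    (∀ χ : ℕ → Fin 2, ∃ (x : Fin (m - 1) → ℕ) (y : ℕ),
      (∀ i, 0 < x i) ∧ 0 < y ∧ (∑ i, x i) = (m - 1) ^ 2 * y ∧
      (∀ i, χ (x i) = χ y)) ∧
    (∃ χ : ℕ → Fin 3, ∀ (x : Fin (m - 1) → ℕ) (y : ℕ),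
      (∀ i, 0 < x i) → 0 < y →
      (∑ i, x i) = (m - 1) ^ 2 * y →
      ¬ (∀ i, χ (x i) = χ y)) := by
  exact ⟨fun χ => two_reg (m-1) (by omega) χ, not_three_reg (m-1) (by omega)⟩
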